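/- Let U and V be nonempty closed convex subsets of X, let A = N_U and B = N_V be their normal cone operators, and let T_{(A,B)} = Id − P_U + P_V ∘ (2P_U − Id), where P_U and P_V are the metric projections onto U and V. Then the infimal displacement vector v_{(A,B)}, i.e. the unique minimal-norm element of cl(ran(Id − T_{(A,B)})), equals the unique minimal-norm element of cl(U − V) (the projection of 0 onto cl(U − V)). -/

import Mathlib

open Set Pointwise

/-- Domain of a set-valued operator. -/
def svDom {X : Type*} (A : X → Set X) : Set X := {x | (A x).Nonempty}

/-- Range of a set-valued operator. -/
def svRan {X : Type*} (A : X → Set X) : Set X := ⋃ x, A x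

/-- Monotonicity of a set-valued operator. -/
def IsMonotoneOp {X : Type*} [NormedAddCommGroup X] [InnerProductSpace ℝ X]
    (A : X → Set X) : Prop :=
  ∀ ⦃x u y v : X⦄, u ∈ A x → v ∈ A y → 0 ≤ (inner ℝ (x - y) (u - v) : ℝ)

/-- Maximal monotonicity of a set-valued operator. -/
def IsMaxMonotoneOp {X : Type*} [NormedAddCommGroup X] [InnerProductSpace ℝ X]
    (A : X → Set X) : Prop :=
  IsMonotoneOp A ∧
    ∀ x u : X, (∀ y v : X, v ∈ A y → 0 ≤ (inner ℝ (x - y) (u - v) : ℝ)) → u ∈ A x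

/-- `A` is 3* monotone (rectangular): for every `x ∈ dom A` and `v ∈ ran A`, the set
`{⟪x - z, v - w⟫ : (z,w) ∈ gra A}` is bounded below. -/
def Is3StarMonotoneOp {X : Type*} [NormedAddCommGroup X] [InnerProductSpace ℝ X]
    (A : X → Set X) : Prop :=
  ∀ x ∈ svDom A, ∀ v ∈ svRan A,
    BddBelow {r : ℝ | ∃ z w : X, w ∈ A z ∧ r = (inner ℝ (x - z) (v - w) : ℝ)}

/-- Two sets are nearly equal if they have the same closure and the same relative
(intrinsic) interior. -/
def NearEq {X : Type*} [NormedAddCommGroup X] [NormedSpace ℝ X] (C D : Set X) : Prop :=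
  closure C = closure D ∧ intrinsicInterior ℝ C = intrinsicInterior ℝ D

/-- `J` is the resolvent of `A`: the single-valued, everywhere-defined map with
`x - J x ∈ A (J x)` for all `x`. -/
def IsResolventOf {X : Type*} [NormedAddCommGroup X] (J : X → X) (A : X → Set X) : Prop :=
  ∀ x : X, x - J x ∈ A (J x)

/-- The Douglas–Rachford operator `T = Id - J_A + J_B ∘ (2 J_A - Id)` built from
the resolvents `J_A` and `J_B`. -/
noncomputable def drT {X : Type*} [NormedAddCommGroup X] [NormedSpace ℝ X]
    (JA JB : X → X) : X → X :=
  fun x => x - JA x + JB ((2 : ℝ) • JA x - x)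

/-- `P` is the metric projection onto `U`. -/
def IsMetricProjection {X : Type*} [NormedAddCommGroup X] (P : X → X) (U : Set X) : Prop :=
  ∀ x : X, P x ∈ U ∧ ∀ y ∈ U, ‖x - P x‖ ≤ ‖x - y‖

/-- For nonempty closed convex `U, V` with metric projections `P_U, P_V`, and
`T = Id - P_U + P_V ∘ (2 P_U - Id)` the Douglas–Rachford operator of `(N_U, N_V)`: the
infimal displacement vector, i.e. the minimal-norm element of `cl (ran (Id - T))`,
equals the minimal-norm element of `cl (U - V)`. -/
theorem infDisp_normalCones_eq_proj {X : Type*} [NormedAddCommGroup X]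
    [InnerProductSpace ℝ X] [FiniteDimensional ℝ X] (U V : Set X)
    (hUne : U.Nonempty) (hVne : V.Nonempty)
    (hUcl : IsClosed U) (hVcl : IsClosed V)
    (hUconv : Convex ℝ U) (hVconv : Convex ℝ V)
    (PU PV : X → X)
    (hPU : IsMetricProjection PU U) (hPV : IsMetricProjection PV V)
    (v v' : X)
    (hv : v ∈ closure (Set.range fun x => x - drT PU PV x) ∧
      ∀ w ∈ closure (Set.range fun x => x - drT PU PV x), ‖v‖ ≤ ‖w‖)
    (hv' : v' ∈ closure (U - V) ∧ ∀ w ∈ closure (U - V), ‖v'‖ ≤ ‖w‖) :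
    v = v' := by
  obtain ⟨hvmem, hvmin⟩ := hv
  obtain ⟨hv'mem, hv'min⟩ := hv'
  -- Step 1: range (Id - T) ⊆ U - V
  have hran : Set.range (fun x => x - drT PU PV x) ⊆ U - V := by
    rintro _ ⟨x, rfl⟩
    have h1 : PU x ∈ U := (hPU x).1
    have h2 : PV ((2 : ℝ) • PU x - x) ∈ V := (hPV _).1
    have hx : x - drT PU PV x = PU x - PV ((2 : ℝ) • PU x - x) := by
      simp only [drT]; abel
    show x - drT PU PV x ∈ U - V
    rw [hx]
    exact Set.sub_mem_sub h1 h2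
  have hsub : closure (Set.range fun x => x - drT PU PV x) ⊆ closure (U - V) :=
    closure_mono hran
  have h1 : ‖v'‖ ≤ ‖v‖ := hv'min v (hsub hvmem)
  -- Step 2: ‖v‖ ≤ ‖v'‖
  have h2 : ‖v‖ ≤ ‖v'‖ := by
    refine le_of_forall_pos_le_add ?_
    intro ε hε
    obtain ⟨d, hd, hdist⟩ := Metric.mem_closure_iff.mp hv'mem ε hε
    obtain ⟨u, hu, w, hw, rfl⟩ := hd
    have hPUu : PU u = u := by
      have h := (hPU u).2 u hu
      simp only [sub_self, norm_zero] at h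
      have : ‖u - PU u‖ = 0 := le_antisymm h (norm_nonneg _)
      have := sub_eq_zero.mp (norm_eq_zero.mp this)
      exact this.symm
    have hz : u - PV u ∈ Set.range (fun x => x - drT PU PV x) := by
      refine ⟨u, ?_⟩
      show u - drT PU PV u = u - PV u
      simp only [drT, hPUu]
      have h3 : (2 : ℝ) • u - u = u := by rw [two_smul]; abel
      rw [h3]
      abel
    have hnorm : ‖u - PV u‖ ≤ ‖u - w‖ := (hPV u).2 w hw
    have hvz : ‖v‖ ≤ ‖u - PV u‖ := hvmin _ (subset_closure hz)
    have huw : ‖u - w‖ ≤ ‖v'‖ + ε := by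
      have : ‖u - w‖ ≤ ‖v'‖ + ‖(u - w) - v'‖ := by
        have := norm_add_le v' ((u - w) - v')
        simpa using this
      have hlt : ‖(u - w) - v'‖ ≤ ε := by
        rw [dist_eq_norm] at hdist
        have : ‖v' - (u - w)‖ ≤ ε := le_of_lt hdist
        rwa [norm_sub_rev] at this
      linarith
    linarith
  have heq : ‖v‖ = ‖v'‖ := le_antisymm h2 h1
  -- Step 3: uniqueness of min-norm element in the closed convex set cl(U - V)
  have hcvx : Convex ℝ (closure (U - V)) := (hUconv.sub hVconv).closure
  have hmid : (1/2 : ℝ) • v + (1/2 : ℝ) • v' ∈ closure (U - V) :=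
    hcvx (hsub hvmem) hv'mem (by norm_num) (by norm_num) (by norm_num)
  have hmin : ‖v'‖ ≤ ‖(1/2 : ℝ) • v + (1/2 : ℝ) • v'‖ := hv'min _ hmid
  have hmid_eq : ‖(1/2 : ℝ) • v + (1/2 : ℝ) • v'‖ = (1/2 : ℝ) * ‖v + v'‖ := by
    rw [← smul_add, norm_smul]
    norm_num
  have hpar : ‖v + v'‖ ^ 2 + ‖v - v'‖ ^ 2 = 2 * (‖v‖ ^ 2 + ‖v'‖ ^ 2) := by
    have := parallelogram_law_with_norm ℝ v v'
    nlinarith [this]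
  have hge : 4 * ‖v'‖ ^ 2 ≤ ‖v + v'‖ ^ 2 := by
    rw [hmid_eq] at hmin
    nlinarith [norm_nonneg (v + v'), norm_nonneg v']
  have heq2 : ‖v‖ ^ 2 = ‖v'‖ ^ 2 := by rw [heq]
  have hzero : ‖v - v'‖ ^ 2 ≤ 0 := by linarith
  have : ‖v - v'‖ = 0 := by nlinarith [norm_nonneg (v - v'), sq_nonneg (‖v - v'‖)]
  exact sub_eq_zero.mp (norm_eq_zero.mp this)
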